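/- Tail bound for the maximum of closed *-clusters: with site percolation at parameter q as above and distinct closed sites u_1, ..., u_M, for every x ∈ ℕ, P(max{|C(u_1)|, ..., |C(u_M)|} < x) ≥ 1 − M·(3^d(1−q))^{⌊log_{3^d} x⌋}. -/

import Mathlib

open scoped BigOperators ENNReal
open MeasureTheory ProbabilityTheory

/-- Sites of the lattice `ℤ^d`. -/
abbrev Site (d : ℕ) := Fin d → ℤ

/-- `*`-adjacency on `ℤ^d`. -/
def adjStar {d : ℕ} (v w : Site d) : Prop := v ≠ w ∧ ∀ i, |v i - w i| ≤ 1

/-- The `*`-connected cluster of closed sites containing `u` (in the configuration `ω`,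
a site `v` is open iff `X v ω = true`). -/
def cluster {d : ℕ} {Ω : Type*} (X : Site d → Ω → Bool) (u : Site d) (ω : Ω) :
    Set (Site d) :=
  {v | ∃ (k : ℕ) (p : Fin (k + 1) → Site d), p 0 = u ∧ p (Fin.last k) = v ∧
    (∀ i, X (p i) ω = false) ∧ ∀ i : Fin k, adjStar (p i.castSucc) (p i.succ)}

/-- Loop-erasure: any path admits an injective sub-path with the same endpoints. -/
lemma exists_inj_path {α : Type*} (R : α → α → Prop) :
    ∀ k : ℕ, ∀ p : ℕ → α, (∀ t, t < k → R (p t) (p (t+1))) →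
    ∃ k' ≤ k, ∃ q : ℕ → α, q 0 = p 0 ∧ q k' = p k ∧
      (∀ t, t < k' → R (q t) (q (t+1))) ∧
      (∀ t, t ≤ k' → ∃ s, s ≤ k ∧ q t = p s) ∧
      Set.InjOn q (Set.Iic k') := by
  intro k
  induction k using Nat.strong_induction_on with
  | _ k ih =>
    intro p hp
    by_cases hinj : Set.InjOn p (Set.Iic k)
    · exact ⟨k, le_rfl, p, rfl, rfl, hp, fun t ht => ⟨t, ht, rfl⟩, hinj⟩
    · simp only [Set.InjOn, not_forall] at hinj
      obtain ⟨a, ha, b, hb, hab, hne⟩ := hinj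
      simp only [Set.mem_Iic] at ha hb
      obtain ⟨i, j, hij, hi, hj, hpij⟩ : ∃ i j, i < j ∧ i ≤ k ∧ j ≤ k ∧ p i = p j := by
        rcases lt_trichotomy a b with h | h | h
        · exact ⟨a, b, h, ha, hb, hab⟩
        · exact absurd h hne
        · exact ⟨b, a, h, hb, ha, hab.symm⟩
      set e := j - i with he
      have he1 : 1 ≤ e := by omega
      set q : ℕ → α := fun t => if t ≤ i then p t else p (t + e) with hq
      have hqle : ∀ s, s ≤ i → q s = p s := fun s hs => if_pos hs
      have hqgt : ∀ s, i < s → q s = p (s + e) := fun s hs => if_neg (Nat.not_le.mpr hs)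
      have hqge : ∀ s, i ≤ s → q s = p (s + e) := by
        intro s hs
        rcases eq_or_lt_of_le hs with h | h
        · rw [hqle s h.symm.le, ← h, show i + e = j by omega]; exact hpij
        · exact hqgt s h
      have hklt : k - e < k := by omega
      have hqstep : ∀ t, t < k - e → R (q t) (q (t+1)) := by
        intro t ht
        rcases lt_or_ge t i with h | h
        · rw [hqle t h.le, hqle (t+1) (by omega)]; exact hp t (by omega)
        · rw [hqge t h, hqge (t+1) (by omega), show t + 1 + e = t + e + 1 by omega]
          exact hp (t + e) (by omega)
      obtain ⟨k', hk', q', h0, hlast, hstep, hrange, hinj'⟩ := ih (k - e) hklt q hqstep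
      refine ⟨k', by omega, q', ?_, ?_, hstep, ?_, hinj'⟩
      · rw [h0, hqle 0 (Nat.zero_le _)]
      · rw [hlast, hqge (k - e) (by omega), show k - e + e = k by omega]
      · intro t ht
        obtain ⟨s, hs, hqs⟩ := hrange t ht
        rcases le_or_gt s i with hsi | hsi
        · exact ⟨s, by omega, by rwa [hqle s hsi] at hqs⟩
        · exact ⟨s + e, by omega, by rwa [hqgt s hsi] at hqs⟩

/-- The path determined by a sequence of steps `δ`, starting at `u₀`. -/
def pth {d : ℕ} (u₀ : Site d) (n : ℕ) (δ : Fin n → Fin d → Fin 3) (j : ℕ) : Site d :=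
  fun i => u₀ i + ∑ t : Fin n, if (t : ℕ) < j then ((δ t i : ℤ) - 1) else 0

lemma pth_zero {d : ℕ} (u₀ : Site d) (n : ℕ) (δ : Fin n → Fin d → Fin 3) :
    pth u₀ n δ 0 = u₀ := by
  funext i; simp [pth]

lemma pth_succ {d : ℕ} (u₀ : Site d) (n : ℕ) (δ : Fin n → Fin d → Fin 3)
    (j : ℕ) (hj : j < n) (i : Fin d) :
    pth u₀ n δ (j + 1) i = pth u₀ n δ j i + ((δ ⟨j, hj⟩ i : ℤ) - 1) := by
  simp only [pth]
  have key : ∀ t : Fin n, (if (t : ℕ) < j + 1 then ((δ t i : ℤ) - 1) else 0)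
      = (if (t : ℕ) < j then ((δ t i : ℤ) - 1) else 0)
        + (if t = ⟨j, hj⟩ then ((δ t i : ℤ) - 1) else 0) := by
    intro t
    by_cases h1 : (t : ℕ) < j
    · rw [if_pos (by omega), if_pos h1, if_neg (by intro h; subst h; simp at h1), add_zero]
    · by_cases h2 : t = ⟨j, hj⟩
      · rw [if_pos (by subst h2; simp), if_neg h1, if_pos h2, zero_add]
      · have : ¬ (t : ℕ) < j + 1 := by
          intro h
          have ht : (t : ℕ) = j := by omega
          exact h2 (Fin.ext (by simp [ht]))
        rw [if_neg this, if_neg h1, if_neg h2, add_zero]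
  rw [Finset.sum_congr rfl (fun t _ => key t), Finset.sum_add_distrib,
    Finset.sum_ite_eq' Finset.univ (⟨j, hj⟩ : Fin n) (fun t => ((δ t i : ℤ) - 1))]
  simp [add_assoc]

lemma two_mul_add_one_le (m : ℕ) : 2 * m + 1 ≤ 3 ^ m := by
  induction m with
  | zero => norm_num
  | succ m ih =>
    have h1 : 1 ≤ 3 ^ m := Nat.one_le_pow _ _ (by norm_num)
    calc 2 * (m + 1) + 1 = (2 * m + 1) + 2 := by ring
    _ ≤ 3 ^ m + 2 * 3 ^ m := by omega
    _ ≤ 3 ^ (m + 1) := by ring_nf; omega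

/-- From a large cluster we extract an injective closed path of length `n` encoded by steps. -/
lemma event_subset {d : ℕ} (hd : 0 < d) {Ω : Type*} (X : Site d → Ω → Bool)
    (u₀ : Site d) (n x : ℕ) (hn : 0 < n) (hx : (3 ^ d) ^ n ≤ x) (ω : Ω)
    (hbig : (x : ℕ∞) ≤ (cluster X u₀ ω).encard) :
    ∃ δ : Fin n → Fin d → Fin 3,
      Function.Injective (fun j : Fin (n + 1) => pth u₀ n δ (j : ℕ)) ∧
      ∀ j : Fin (n + 1), X (pth u₀ n δ (j : ℕ)) ω = false := by
  classical
  have hfar : ∃ v ∈ cluster X u₀ ω, ∃ i₀, (n : ℤ) ≤ |v i₀ - u₀ i₀| := by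
    by_contra hcon
    push_neg at hcon
    set B : Finset (Site d) :=
      Fintype.piFinset (fun i => Finset.Icc (u₀ i - ((n : ℤ) - 1)) (u₀ i + ((n : ℤ) - 1))) with hB
    have hsub : cluster X u₀ ω ⊆ ↑B := by
      intro v hv
      simp only [hB, Finset.coe_sort_coe, Finset.mem_coe, Fintype.mem_piFinset, Finset.mem_Icc]
      intro i
      have h1 := hcon v hv i
      rw [abs_lt] at h1
      omega
    have hBcard : B.card = (2 * (n - 1) + 1) ^ d := by
      rw [hB, Fintype.card_piFinset]
      have : ∀ i : Fin d, (Finset.Icc (u₀ i - ((n : ℤ) - 1)) (u₀ i + ((n : ℤ) - 1))).card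
          = 2 * (n - 1) + 1 := by
        intro i
        rw [Int.card_Icc]
        omega
      rw [Finset.prod_congr rfl (fun i _ => this i), Finset.prod_const, Finset.card_univ,
        Fintype.card_fin]
    have hlt : B.card < x := by
      rw [hBcard]
      calc (2 * (n - 1) + 1) ^ d < (3 ^ n) ^ d := by
            apply Nat.pow_lt_pow_left _ hd.ne'
            have := two_mul_add_one_le (n - 1)
            have h3 : 3 ^ (n - 1) < 3 ^ n := Nat.pow_lt_pow_right (by norm_num) (by omega)
            omega
        _ = (3 ^ d) ^ n := by rw [← Nat.pow_mul, ← Nat.pow_mul, Nat.mul_comm]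
        _ ≤ x := hx
    have hle : (cluster X u₀ ω).encard ≤ B.card := by
      rw [← Set.encard_coe_eq_coe_finsetCard]
      exact Set.encard_mono hsub
    have : (x : ℕ∞) ≤ (B.card : ℕ∞) := le_trans hbig hle
    rw [Nat.cast_le] at this
    omega
  obtain ⟨v, hv, i₀, hi₀⟩ := hfar
  obtain ⟨k, p, hp0, hpl, hpc, hpadj⟩ := hv
  set P : ℕ → Site d := fun t => p ⟨min t k, Nat.lt_succ_of_le (min_le_right _ _)⟩ with hP
  have hP0 : P 0 = u₀ := (congrArg p (Fin.ext (by simp))).trans hp0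
  have hPk : P k = v := (congrArg p (Fin.ext (by simp [Fin.val_last]))).trans hpl
  have hPc : ∀ t, X (P t) ω = false := fun t => hpc _
  have hPstep : ∀ t, t < k → ∀ i, |P (t + 1) i - P t i| ≤ 1 := by
    intro t ht i
    have h1 : P t = p ((⟨t, ht⟩ : Fin k).castSucc) :=
      congrArg p (Fin.ext (by simp only [Fin.coe_castSucc, Fin.val_mk]; omega))
    have h2 : P (t + 1) = p ((⟨t, ht⟩ : Fin k).succ) :=
      congrArg p (Fin.ext (by simp only [Fin.val_succ, Fin.val_mk]; omega))
    rw [h1, h2, abs_sub_comm]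
    exact (hpadj ⟨t, ht⟩).2 i
  obtain ⟨k', hk'k, S, hS0, hSl, hSstep, hSrange, hSinj⟩ :=
    exists_inj_path (fun a b : Site d => ∀ i, |b i - a i| ≤ 1) k P hPstep
  rw [hP0] at hS0
  rw [hPk] at hSl
  have hSc : ∀ t, t ≤ k' → X (S t) ω = false := by
    intro t ht
    obtain ⟨s, _, hqs⟩ := hSrange t ht
    rw [hqs]; exact hPc s
  have hgrow : ∀ t, t ≤ k' → ∀ i, |S t i - S 0 i| ≤ (t : ℤ) := by
    intro t
    induction t with
    | zero => intro _ i; simp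
    | succ t ih =>
      intro ht i
      have h1 := hSstep t (by omega) i
      have h2 := ih (by omega) i
      calc |S (t + 1) i - S 0 i| ≤ |S (t + 1) i - S t i| + |S t i - S 0 i| := abs_sub_le _ _ _
        _ ≤ 1 + t := add_le_add h1 h2
        _ = ((t + 1 : ℕ) : ℤ) := by push_cast; ring
  have hnk' : n ≤ k' := by
    have hg := hgrow k' le_rfl i₀
    rw [hSl, hS0] at hg
    have : (n : ℤ) ≤ (k' : ℤ) := le_trans hi₀ hg
    exact_mod_cast this
  have hstepbd : ∀ t : Fin n, ∀ i, -1 ≤ S ((t : ℕ) + 1) i - S (t : ℕ) i ∧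
      S ((t : ℕ) + 1) i - S (t : ℕ) i ≤ 1 := by
    intro t i
    have := hSstep (t : ℕ) (by omega) i
    rwa [abs_le] at this
  set δ : Fin n → Fin d → Fin 3 := fun t i =>
    ⟨(S ((t : ℕ) + 1) i - S (t : ℕ) i + 1).toNat, by
      have := hstepbd t i; omega⟩ with hδ
  have hpq : ∀ j, j ≤ n → pth u₀ n δ j = S j := by
    intro j
    induction j with
    | zero => intro _; rw [pth_zero, hS0]
    | succ j ih =>
      intro hj
      funext i
      rw [pth_succ u₀ n δ j (by omega) i, ih (by omega)]
      have hb := hstepbd ⟨j, by omega⟩ i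
      simp only [Fin.val_mk] at hb
      simp only [hδ, Fin.val_mk]
      omega
  refine ⟨δ, ?_, ?_⟩
  · intro j1 j2 hj
    simp only [hpq _ (by omega : (j1 : ℕ) ≤ n), hpq _ (by omega : (j2 : ℕ) ≤ n)] at hj
    have := hSinj (Set.mem_Iic.mpr (by omega : (j1 : ℕ) ≤ k'))
      (Set.mem_Iic.mpr (by omega : (j2 : ℕ) ≤ k')) hj
    exact Fin.ext this
  · intro j
    rw [hpq _ (by omega : (j : ℕ) ≤ n)]
    exact hSc _ (by omega)

/-- Tail bound for a single closed `*`-cluster. -/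
lemma cluster_tail {d : ℕ} (hd : 0 < d)
    {Ω : Type*} [MeasurableSpace Ω] (μ : Measure Ω) [IsProbabilityMeasure μ]
    (q : ℝ) (hq0 : 0 ≤ q)
    (X : Site d → Ω → Bool) (hXmeas : ∀ v, Measurable (X v))
    (hindep : iIndepFun X μ)
    (hdist : ∀ v, μ {ω | X v ω = true} = ENNReal.ofReal q)
    (u₀ : Site d) (x : ℕ) :
    μ {ω | (x : ℕ∞) ≤ (cluster X u₀ ω).encard}
      ≤ ENNReal.ofReal ((3 : ℝ) ^ d * (1 - q)) ^ (Nat.log (3 ^ d) x) := by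
  classical
  have hclosed_prob : ∀ v, μ (X v ⁻¹' {false}) = ENNReal.ofReal (1 - q) := by
    intro v
    have h1 : X v ⁻¹' {false} = {ω | X v ω = true}ᶜ := by
      ext ω; simp
    have h2 : MeasurableSet {ω | X v ω = true} := hXmeas v (measurableSet_singleton true)
    rw [h1, prob_compl_eq_one_sub h2, hdist v,
      ENNReal.ofReal_sub 1 hq0, ENNReal.ofReal_one]
  set n := Nat.log (3 ^ d) x with hn'
  rcases Nat.eq_zero_or_pos n with hn | hn
  · rw [hn, pow_zero]; exact prob_le_one
  · have hx0 : x ≠ 0 := by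
      intro h
      rw [hn', h, Nat.log_zero_right] at hn
      exact absurd hn (lt_irrefl 0)
    have hx : (3 ^ d) ^ n ≤ x := Nat.pow_log_le_self _ hx0
    set D : Finset (Fin n → Fin d → Fin 3) :=
      Finset.univ.filter
        (fun δ => Function.Injective (fun j : Fin (n + 1) => pth u₀ n δ (j : ℕ))) with hD
    have hsub : {ω | (x : ℕ∞) ≤ (cluster X u₀ ω).encard}
        ⊆ ⋃ δ ∈ D, ⋂ j : Fin (n + 1), X (pth u₀ n δ (j : ℕ)) ⁻¹' {false} := by
      intro ω hω
      obtain ⟨δ, hinj, hcl⟩ := event_subset hd X u₀ n x hn hx ω hω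
      exact Set.mem_biUnion
        (show δ ∈ D by simp only [hD, Finset.mem_filter, Finset.mem_univ, true_and]; exact hinj)
        (by simp only [Set.mem_iInter, Set.mem_preimage, Set.mem_singleton_iff]; exact hcl)
    have hδbound : ∀ δ ∈ D, μ (⋂ j : Fin (n + 1), X (pth u₀ n δ (j : ℕ)) ⁻¹' {false})
        ≤ ENNReal.ofReal (1 - q) ^ n := by
      intro δ hδ
      have hinj : Function.Injective (fun j : Fin (n + 1) => pth u₀ n δ (j : ℕ)) := by
        simpa only [hD, Finset.mem_filter, Finset.mem_univ, true_and] using hδ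
      set T : Finset (Site d) :=
        Finset.image (fun j : Fin (n + 1) => pth u₀ n δ (j : ℕ)) Finset.univ with hT
      have hset : (⋂ j : Fin (n + 1), X (pth u₀ n δ (j : ℕ)) ⁻¹' {false})
          = ⋂ v ∈ T, X v ⁻¹' {false} := by
        ext ω
        simp only [Set.mem_iInter, Set.mem_preimage, Set.mem_singleton_iff, hT,
          Finset.mem_image, Finset.mem_univ, true_and]
        constructor
        · rintro h v ⟨j, rfl⟩
          exact h j
        · intro h j
          exact h _ ⟨j, rfl⟩
      have hmeas : ∀ v : Site d, v ∈ T → MeasurableSet ({false} : Set Bool) :=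
        fun _ _ => measurableSet_singleton false
      have hprod := hindep.measure_inter_preimage_eq_mul T (sets := fun _ => {false}) hmeas
      have hTcard : T.card = n + 1 := by
        rw [hT, Finset.card_image_of_injective _ hinj, Finset.card_univ, Fintype.card_fin]
      rw [hset, hprod]
      have : ∏ v ∈ T, μ (X v ⁻¹' {false}) = ENNReal.ofReal (1 - q) ^ (n + 1) := by
        rw [Finset.prod_congr rfl (fun v _ => hclosed_prob v), Finset.prod_const, hTcard]
      rw [this]
      exact pow_le_pow_of_le_one zero_le' (ENNReal.ofReal_le_one.mpr (by linarith)) (by omega)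
    calc μ {ω | (x : ℕ∞) ≤ (cluster X u₀ ω).encard}
        ≤ μ (⋃ δ ∈ D, ⋂ j : Fin (n + 1), X (pth u₀ n δ (j : ℕ)) ⁻¹' {false}) :=
          measure_mono hsub
      _ ≤ ∑ δ ∈ D, μ (⋂ j : Fin (n + 1), X (pth u₀ n δ (j : ℕ)) ⁻¹' {false}) :=
          measure_biUnion_finset_le D _
      _ ≤ ∑ _δ ∈ D, ENNReal.ofReal (1 - q) ^ n := Finset.sum_le_sum hδbound
      _ = D.card * ENNReal.ofReal (1 - q) ^ n := by
          rw [Finset.sum_const, nsmul_eq_mul]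
      _ ≤ (((3 ^ d) ^ n : ℕ) : ℝ≥0∞) * ENNReal.ofReal (1 - q) ^ n := by
          apply mul_le_mul_left
          have : D.card ≤ (3 ^ d) ^ n := by
            calc D.card ≤ Fintype.card (Fin n → Fin d → Fin 3) := Finset.card_le_univ D
              _ = (3 ^ d) ^ n := by simp [Fintype.card_fun]
          exact_mod_cast this
      _ = ENNReal.ofReal ((3 : ℝ) ^ d * (1 - q)) ^ n := by
          rw [ENNReal.ofReal_mul (by positivity), mul_pow]
          congr 1
          have h3 : ENNReal.ofReal ((3 : ℝ) ^ d) = ((3 ^ d : ℕ) : ℝ≥0∞) := by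
            rw [show ((3 : ℝ) ^ d) = (((3 ^ d : ℕ) : ℝ)) by push_cast; ring,
              ENNReal.ofReal_natCast]
          rw [h3, Nat.cast_pow]

/-- Tail bound for the maximum of closed `*`-clusters: for i.i.d. site
percolation at parameter `q` and distinct sites `u_1, …, u_M`, for every `x ∈ ℕ`,
`P(max_i |C(u_i)| < x) ≥ 1 − M·(3^d(1−q))^{⌊log_{3^d} x⌋}`. -/
theorem max_cluster_size_bound {d : ℕ} (hd : 0 < d)
    {Ω : Type*} [MeasurableSpace Ω] (μ : Measure Ω) [IsProbabilityMeasure μ]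
    (q : ℝ) (hq1 : 1 - (3 * (d : ℝ))⁻¹ < q) (hq2 : q < 1)
    (hq3 : (3 : ℝ) ^ d * (1 - q) < 1)
    (X : Site d → Ω → Bool) (hXmeas : ∀ v, Measurable (X v))
    (hindep : iIndepFun X μ)
    (hdist : ∀ v, μ {ω | X v ω = true} = ENNReal.ofReal q)
    (M : ℕ) (u : Fin M → Site d) (hu : Function.Injective u)
    (x : ℕ) :
    ENNReal.ofReal (1 - (M : ℝ) * ((3 : ℝ) ^ d * (1 - q)) ^ (Nat.log (3 ^ d) x))
      ≤ μ {ω | ∀ i : Fin M, (cluster X (u i) ω).encard < (x : ℕ∞)} := by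
  classical
  have hq0 : 0 ≤ q := by
    have hd1 : (1 : ℝ) ≤ d := by exact_mod_cast hd
    have h3 : (1 : ℝ) ≤ 3 * d := by linarith
    have h4 : (3 * (d : ℝ))⁻¹ ≤ 1 := inv_le_one_of_one_le₀ h3
    linarith
  have hr0 : (0 : ℝ) ≤ (3 : ℝ) ^ d * (1 - q) := mul_nonneg (by positivity) (by linarith)
  set n := Nat.log (3 ^ d) x with hn'
  set r := ENNReal.ofReal ((3 : ℝ) ^ d * (1 - q)) with hr
  set s := {ω | ∀ i : Fin M, (cluster X (u i) ω).encard < (x : ℕ∞)} with hs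
  have hcompl : sᶜ = ⋃ i : Fin M, {ω | (x : ℕ∞) ≤ (cluster X (u i) ω).encard} := by
    ext ω
    simp only [hs, Set.mem_compl_iff, Set.mem_setOf_eq, not_forall, not_lt, Set.mem_iUnion]
  have h1 : μ sᶜ ≤ (M : ℝ≥0∞) * r ^ n := by
    rw [hcompl]
    calc μ (⋃ i : Fin M, {ω | (x : ℕ∞) ≤ (cluster X (u i) ω).encard})
        ≤ ∑' i : Fin M, μ {ω | (x : ℕ∞) ≤ (cluster X (u i) ω).encard} := measure_iUnion_le _
      _ = ∑ i : Fin M, μ {ω | (x : ℕ∞) ≤ (cluster X (u i) ω).encard} := tsum_fintype _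
      _ ≤ ∑ _i : Fin M, r ^ n := Finset.sum_le_sum
          (fun i _ => cluster_tail hd μ q hq0 X hXmeas hindep hdist (u i) x)
      _ = (M : ℝ≥0∞) * r ^ n := by
          rw [Finset.sum_const, nsmul_eq_mul, Finset.card_univ, Fintype.card_fin]
  have h2 : (1 : ℝ≥0∞) ≤ μ s + μ sᶜ := by
    have := measure_union_le (μ := μ) s sᶜ
    rw [Set.union_compl_self, measure_univ] at this
    exact this
  have key : ENNReal.ofReal ((M : ℝ) * ((3 : ℝ) ^ d * (1 - q)) ^ n) = (M : ℝ≥0∞) * r ^ n := by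
    rw [ENNReal.ofReal_mul (Nat.cast_nonneg M), ENNReal.ofReal_natCast,
      ENNReal.ofReal_pow hr0]
  rw [ENNReal.ofReal_sub 1 (mul_nonneg (Nat.cast_nonneg M) (pow_nonneg hr0 n)),
    ENNReal.ofReal_one, key]
  rw [tsub_le_iff_right]
  calc (1 : ℝ≥0∞) ≤ μ s + μ sᶜ := h2
    _ ≤ μ s + (M : ℝ≥0∞) * r ^ n := add_le_add le_rfl h1
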